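/- For 0 ≤ j ≤ m, the evaluation of α_{m,2m-j} at q^{1/2} = 1 equals 4^j · (m choose j). In classical terms: Σ_{k=0}^{⌊j/2⌋} (-1)^k C(2m+1, k) C(4m-j-2k+1, 4m-2j+1) = 4^j C(m, j), where C denotes ordinary binomial coefficients. -/

import Mathlib

set_option maxRecDepth 8000
open PowerSeries Finset

private lemma coeff_one_sub_X_pow (N n : ℕ) :
    PowerSeries.coeff (R := ℤ) n ((1 - X)^N) = (-1)^n * N.choose n := by
  have h1 : ((1 : ℤ⟦X⟧) - X)^N
      = ∑ k ∈ range (N+1), (-X)^k * 1^(N-k) * (N.choose k : ℤ⟦X⟧) := by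
    rw [← add_pow]; ring_nf
  have h2 : ∀ k, PowerSeries.coeff (R := ℤ) n ((-X : ℤ⟦X⟧)^k * 1^(N-k) * (N.choose k : ℤ⟦X⟧))
      = if n = k then ((-1)^n * N.choose n : ℤ) else 0 := by
    intro k
    have : ((-X : ℤ⟦X⟧)^k * 1^(N-k) * (N.choose k : ℤ⟦X⟧))
        = (C (R := ℤ)) ((-1)^k * N.choose k) * X^k := by
      rw [map_mul, map_pow, map_natCast, map_neg, map_one]
      ring
    rw [this, coeff_C_mul, coeff_X_pow]
    split_ifs with hnk
    · subst hnk; ring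
    · ring
  rw [h1, map_sum]
  simp only [h2]
  rw [Finset.sum_ite_eq (range (N+1)) n]
  split_ifs with hn
  · rfl
  · have : N.choose n = 0 := Nat.choose_eq_zero_of_lt
      (Nat.lt_of_succ_le (not_lt.mp (by simpa [Finset.mem_range] using hn)))
    simp [this]

private lemma coeff_one_add_X_mul_pow (e : ℕ) :
    PowerSeries.coeff (R := ℤ) (e+1) ((1 + X) * (1 - X)^(2*e+1)) = 0 := by
  rw [add_mul, one_mul, map_add, coeff_one_sub_X_pow, coeff_succ_X_mul,
    coeff_one_sub_X_pow]
  have hc : (2*e+1).choose (e+1) = (2*e+1).choose e := by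
    rw [← Nat.choose_symm (by omega : e ≤ 2*e+1)]
    congr 1; omega
  rw [hc, pow_succ]
  ring

private lemma pow_mul_invOneSubPow (a b : ℕ) :
    (1 - X : ℤ⟦X⟧)^a * (invOneSubPow ℤ (a+b)).val = (invOneSubPow ℤ b).val := by
  set w : (ℤ⟦X⟧)ˣ := Units.mkOfMulEqOne (1 - X) (mk 1 : ℤ⟦X⟧)
      (Eq.trans (mul_comm _ _) (mk_one_mul_one_sub_eq_one ℤ)) with hw
  have h1 : invOneSubPow ℤ (a+b) = w⁻¹ ^ (a+b) := invOneSubPow_eq_inv_one_sub_pow ℤ (a+b)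
  have h2 : invOneSubPow ℤ b = w⁻¹ ^ b := invOneSubPow_eq_inv_one_sub_pow ℤ b
  have h3 : (1 - X : ℤ⟦X⟧)^a = ((w^a : (ℤ⟦X⟧)ˣ) : ℤ⟦X⟧) := by
    rw [Units.val_pow_eq_pow_val]; rfl
  rw [h1, h2, h3, ← Units.val_mul]
  congr 1
  rw [pow_add, ← mul_assoc, ← mul_pow, mul_inv_cancel, one_pow, one_mul]

theorem stmt_5 (m j : ℕ) (h : j ≤ m) :
    ∑ k ∈ Finset.range (j / 2 + 1),
      (-1 : ℤ) ^ k * (Nat.choose (2 * m + 1) k) *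
        (Nat.choose (4 * m + 1 - j - 2 * k) (4 * m + 1 - 2 * j))
      = 4 ^ j * Nat.choose m j := by
  set d : ℕ := 4*m+1-2*j with hd
  set U : ℤ⟦X⟧ := (invOneSubPow ℤ (d+1)).val with hU
  have hUcoeff : ∀ n, PowerSeries.coeff (R := ℤ) n U = ((d+n).choose d : ℤ) := by
    intro n; rw [hU, invOneSubPow_val_succ_eq_mk_add_choose, coeff_mk]
  -- Step A : the LHS is the j-th coefficient of (1-X^2)^(2m+1) * U
  have hexp : ((1:ℤ⟦X⟧) - X^2)^(2*m+1)
      = ∑ k ∈ range (2*m+1+1), (C (R := ℤ)) ((-1)^k * (2*m+1).choose k) * X^(2*k) := by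
    have h1 : ((1:ℤ⟦X⟧) - X^2)^(2*m+1)
        = ∑ k ∈ range (2*m+1+1), (-X^2)^k * 1^(2*m+1-k) * ((2*m+1).choose k : ℤ⟦X⟧) := by
      rw [← add_pow]; ring_nf
    rw [h1]
    refine Finset.sum_congr rfl ?_
    intro k _
    rw [map_mul, map_pow, map_natCast, map_neg, map_one, pow_mul]
    ring
  have hterm : ∀ k, PowerSeries.coeff (R := ℤ) j ((C (R := ℤ)) ((-1)^k * (2*m+1).choose k) * X^(2*k) * U)
      = if 2*k ≤ j then ((-1)^k * ((2*m+1).choose k) * ((d + (j - 2*k)).choose d : ℤ) : ℤ)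
        else 0 := by
    intro k
    rw [mul_assoc, coeff_C_mul, coeff_X_pow_mul']
    split_ifs with hk
    · rw [hUcoeff]
    · ring
  have stepA : (∑ k ∈ Finset.range (j / 2 + 1),
      (-1 : ℤ) ^ k * (Nat.choose (2 * m + 1) k) *
        (Nat.choose (4 * m + 1 - j - 2 * k) (4 * m + 1 - 2 * j)))
      = PowerSeries.coeff (R := ℤ) j (((1:ℤ⟦X⟧) - X^2)^(2*m+1) * U) := by
    rw [hexp, Finset.sum_mul, map_sum]
    simp only [hterm]
    rw [← Finset.sum_subset (Finset.range_subset_range.mpr (by omega : j/2+1 ≤ 2*m+1+1))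
      (fun k _ hk => by
        rw [if_neg]
        simp only [Finset.mem_range] at hk
        omega)]
    refine Finset.sum_congr rfl ?_
    intro k hk
    simp only [Finset.mem_range] at hk
    rw [if_pos (by omega : 2*k ≤ j)]
    have e1 : 4 * m + 1 - j - 2 * k = d + (j - 2*k) := by omega
    have e2 : 4 * m + 1 - 2 * j = d := by omega
    rw [e1, e2]
  -- Step B : expand via (1+X)^(2m+1) = (1+X)((1-X)^2+4X)^m
  have hbin : ((1:ℤ⟦X⟧)+X)^(2*m+1)
      = (1+X) * ∑ i ∈ range (m+1),
          (4*X)^i * ((1-X)^2)^(m-i) * (m.choose i : ℤ⟦X⟧) := by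
    rw [← add_pow]
    have h2 : ((4:ℤ⟦X⟧)*X) + (1-X)^2 = (1+X)^2 := by ring
    rw [h2, ← pow_mul]
    rw [show (1+X : ℤ⟦X⟧)^(2*m+1) = (1+X)^(2*m) * (1+X) from pow_succ _ _,
      show 2*m = m*2 by ring]
    ring
  have hfac : ((1:ℤ⟦X⟧) - X^2)^(2*m+1) * U
      = ∑ i ∈ range (m+1), (C (R := ℤ)) (4^i * m.choose i) *
          (X^i * ((1+X) * ((1-X)^(2*(m-i) + (2*m+1)) * U))) := by
    rw [show ((1:ℤ⟦X⟧) - X^2) = (1+X)*(1-X) from by ring, mul_pow, hbin]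
    rw [Finset.mul_sum, Finset.sum_mul, Finset.sum_mul]
    refine Finset.sum_congr rfl ?_
    intro i hi
    conv_rhs => rw [pow_add, pow_mul]
    rw [map_mul, map_pow, map_natCast, map_ofNat]
    ring
  rw [stepA, hfac, map_sum]
  -- Step C : only the i = j term survives
  rw [Finset.sum_eq_single_of_mem j (Finset.mem_range.mpr (by omega))]
  · -- the i = j term
    have e3 : 2*(m-j) + (2*m+1) = d := by omega
    rw [e3, hU, pow_mul_invOneSubPow d 1, coeff_C_mul]
    have e4 : PowerSeries.coeff (R := ℤ) j
        (X^j * ((1+X) * (invOneSubPow ℤ 1).val)) = 1 := by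
      rw [coeff_X_pow_mul', if_pos (le_refl j), Nat.sub_self,
        coeff_zero_eq_constantCoeff, map_mul,
        show (invOneSubPow ℤ 1).val = PowerSeries.mk (fun n => ((0+n).choose 0 : ℤ)) from
          invOneSubPow_val_succ_eq_mk_add_choose ℤ 0]
      simp
    rw [e4]
    ring
  · -- other terms vanish
    intro i hi hij
    rw [coeff_C_mul]
    rcases lt_or_gt_of_ne hij with hlt | hgt
    · -- i < j
      obtain ⟨e, he⟩ : ∃ e, j - i = e + 1 := ⟨j-i-1, by omega⟩
      have huone : ((1:ℤ⟦X⟧)-X)^(d+1) * U = 1 := by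
        rw [hU, ← invOneSubPow_inv_eq_one_sub_pow]
        exact (invOneSubPow ℤ (d+1)).inv_val
      have e5 : 2*(m-i) + (2*m+1) = (2*e+1) + (d+1) := by omega
      have e6 : ((1:ℤ⟦X⟧)-X)^((2*e+1) + (d+1)) * U = (1-X)^(2*e+1) := by
        rw [pow_add, mul_assoc, huone, mul_one]
      rw [e5, e6, coeff_X_pow_mul', if_pos (by omega : i ≤ j), he,
        coeff_one_add_X_mul_pow, mul_zero]
    · -- i > j
      rw [coeff_X_pow_mul', if_neg (by omega), mul_zero]
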